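/- For every real α ≥ 2 there exists a constant u_α > 0 such that for all real z ≥ −1, (1/(α(α−1)))·[(z+1)^α − 1 − α·z] ≥ u_α·|z|^α. -/

import Mathlib

open Real Set

private lemma aux_pos (α : ℝ) (hα : 2 ≤ α) :
    MonotoneOn (fun x : ℝ => (x + 1) ^ α - x ^ α - α * x) (Ici 0) := by
  have h1 : (1:ℝ) ≤ α - 1 := by linarith
  apply monotoneOn_of_hasDerivWithinAt_nonneg (convex_Ici 0)
    (f' := fun x => α * (x + 1) ^ (α - 1) - α * x ^ (α - 1) - α)
  · apply ContinuousOn.sub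
    apply ContinuousOn.sub
    · exact ((continuous_id.add continuous_const).rpow_const
        (fun x => Or.inr (by linarith))).continuousOn
    · exact (continuous_id.rpow_const (fun x => Or.inr (by linarith))).continuousOn
    · exact (continuous_const.mul continuous_id).continuousOn
  · intro x hx
    rw [interior_Ici] at hx
    have hx0 : (0:ℝ) < x := hx
    have d1 : HasDerivAt (fun x : ℝ => (x + 1) ^ α) (α * (x + 1) ^ (α - 1)) x := by
      have := (Real.hasDerivAt_rpow_const (x := x + 1) (p := α)
        (Or.inl (by positivity))).comp x ((hasDerivAt_id x).add_const 1)
      simpa [Function.comp_def] using this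
    have d2 : HasDerivAt (fun x : ℝ => x ^ α) (α * x ^ (α - 1)) x :=
      Real.hasDerivAt_rpow_const (Or.inl hx0.ne')
    have d3 : HasDerivAt (fun x : ℝ => α * x) α x := by
      simpa using (hasDerivAt_id x).const_mul α
    exact ((d1.sub d2).sub d3).hasDerivWithinAt
  · intro x hx
    rw [interior_Ici] at hx
    have hx0 : (0:ℝ) < x := hx
    have hsum : x ^ (α - 1) + 1 ≤ (x + 1) ^ (α - 1) := by
      have h := NNReal.add_rpow_le_rpow_add x.toNNReal 1 h1
      rw [← NNReal.coe_le_coe] at h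
      push_cast [NNReal.coe_rpow, Real.coe_toNNReal x hx0.le] at h
      simpa using h
    have hαpos : (0:ℝ) < α := by linarith
    nlinarith [mul_le_mul_of_nonneg_left hsum hαpos.le]

private lemma aux_neg (α : ℝ) (hα : 2 ≤ α) :
    MonotoneOn (fun t : ℝ => (1 - t) ^ α + α * t - t * t) (Icc 0 1) := by
  apply monotoneOn_of_hasDerivWithinAt_nonneg (convex_Icc 0 1)
    (f' := fun t => -(α * (1 - t) ^ (α - 1)) + α - 2 * t)
  · apply ContinuousOn.sub
    apply ContinuousOn.add
    · exact ((continuous_const.sub continuous_id).rpow_const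
        (fun x => Or.inr (by linarith))).continuousOn
    · exact (continuous_const.mul continuous_id).continuousOn
    · exact (continuous_id.mul continuous_id).continuousOn
  · intro t ht
    have d1 : HasDerivAt (fun t : ℝ => (1 - t) ^ α) (-(α * (1 - t) ^ (α - 1))) t := by
      have := (Real.hasDerivAt_rpow_const (x := 1 - t) (p := α)
        (Or.inr (by linarith))).comp t ((hasDerivAt_id t).const_sub 1)
      rw [Function.comp_def] at this
      rw [show -(α * (1 - t) ^ (α - 1)) = α * (1 - t) ^ (α - 1) * -1 by ring]
      exact this
    have d2 : HasDerivAt (fun t : ℝ => α * t) α t := by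
      simpa using (hasDerivAt_id t).const_mul α
    have d3 : HasDerivAt (fun t : ℝ => t * t) (2 * t) t := by
      simpa [two_mul] using (hasDerivAt_id' t).fun_mul (hasDerivAt_id' t)
    exact ((d1.add d2).sub d3).hasDerivWithinAt
  · intro t ht
    rw [interior_Icc] at ht
    obtain ⟨ht0, ht1⟩ := ht
    have h1t : (1 - t) ^ (α - 1) ≤ 1 - t := by
      calc (1 - t) ^ (α - 1) ≤ (1 - t) ^ (1:ℝ) :=
        Real.rpow_le_rpow_of_exponent_ge (by linarith) (by linarith) (by linarith)
      _ = 1 - t := Real.rpow_one _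
    have hαpos : (0:ℝ) < α := by linarith
    nlinarith [mul_le_mul_of_nonneg_left h1t hαpos.le]

theorem leindler_type_inequality (α : ℝ) (hα : 2 ≤ α) :
    ∃ u : ℝ, 0 < u ∧ ∀ z : ℝ, -1 ≤ z →
      (1 / (α * (α - 1))) * ((z + 1) ^ α - 1 - α * z) ≥ u * |z| ^ α := by
  have hαα : (0:ℝ) < α * (α - 1) := by nlinarith
  refine ⟨1 / (α * (α - 1)), by positivity, fun z hz => ?_⟩
  have key : |z| ^ α ≤ (z + 1) ^ α - 1 - α * z := by
    rcases le_or_gt 0 z with h0 | h0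
    · rw [abs_of_nonneg h0]
      have := aux_pos α hα (mem_Ici.2 le_rfl) (mem_Ici.2 h0) h0
      norm_num [Real.zero_rpow (by positivity : α ≠ 0)] at this
      linarith
    · rw [abs_of_neg h0]
      have ht : -z ∈ Icc (0:ℝ) 1 := ⟨by linarith, by linarith⟩
      have := aux_neg α hα (left_mem_Icc.2 zero_le_one) ht ht.1
      norm_num at this
      have h2 : (-z) ^ α ≤ (-z) * (-z) := by
        rcases eq_or_lt_of_le ht.1 with h | h
        · rw [← h, Real.zero_rpow (by positivity)]; simp
        · calc (-z) ^ α ≤ (-z) ^ (2:ℝ) :=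
            Real.rpow_le_rpow_of_exponent_ge h ht.2 hα
          _ = (-z) * (-z) := by
            rw [show (2:ℝ) = ((2:ℕ):ℝ) by norm_num, Real.rpow_natCast]; ring
      rw [add_comm (1:ℝ) z] at this
      nlinarith
  have := mul_le_mul_of_nonneg_left key (le_of_lt (by positivity : (0:ℝ) < 1 / (α * (α - 1))))
  linarith
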